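/- For n ≥ 1, the positive spanning set D_⊕ := {e₁,…,e_n, −e₁,…,−e_n} ⊂ ℝⁿ (the coordinate vectors and their negatives) has cosine measure exactly 1/√n; that is, min over nonzero v ∈ ℝⁿ of max over d ∈ D_⊕ of dᵀv/(‖d‖‖v‖) equals 1/√n. -/

import Mathlib

open scoped RealInnerProductSpace

/-- The positive spanning set `D_⊕ = {e₁, …, e_n, -e₁, …, -e_n}` consisting of the
canonical basis vectors of `ℝⁿ` and their negatives. -/
def Dplus (n : ℕ) : Set (EuclideanSpace ℝ (Fin n)) :=
  {d | ∃ i : Fin n, d = EuclideanSpace.single i 1 ∨ d = -EuclideanSpace.single i 1}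

/-- the cosine measure of `D_⊕`, i.e. the minimum over nonzero `v ∈ ℝⁿ`
of the maximum over `d ∈ D_⊕` of `⟪d, v⟫/(‖d‖ ‖v‖)`, equals `1/√n`. -/
theorem cosine_measure_Dplus {n : ℕ} (hn : 1 ≤ n) :
    sInf {r : ℝ | ∃ v : EuclideanSpace ℝ (Fin n), v ≠ 0 ∧
        r = sSup {s : ℝ | ∃ d ∈ Dplus n, s = ⟪d, v⟫ / (‖d‖ * ‖v‖)}}
      = 1 / Real.sqrt n := by
  have hne : (Finset.univ : Finset (Fin n)).Nonempty := ⟨⟨0, hn⟩, Finset.mem_univ _⟩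
  have hnpos : (0:ℝ) < (n:ℝ) := by exact_mod_cast hn
  have hsq : (0:ℝ) < Real.sqrt n := Real.sqrt_pos.mpr hnpos
  -- key : for nonzero v, the inner sSup set has greatest element (max_i |v i|)/‖v‖
  have key : ∀ v : EuclideanSpace ℝ (Fin n), v ≠ 0 →
      IsGreatest {s : ℝ | ∃ d ∈ Dplus n, s = ⟪d, v⟫ / (‖d‖ * ‖v‖)}
        ((Finset.univ.sup' hne fun i => |v i|) / ‖v‖) := by
    intro v hv
    have hvpos : 0 < ‖v‖ := norm_pos_iff.mpr hv
    constructor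
    · obtain ⟨i, -, hi⟩ := Finset.exists_mem_eq_sup' hne fun i => |v i|
      rcases abs_cases (v i) with ⟨h1, _⟩ | ⟨h1, _⟩
      · refine ⟨EuclideanSpace.single i 1, ⟨i, Or.inl rfl⟩, ?_⟩
        rw [hi, h1]
        simp [EuclideanSpace.inner_single_left, EuclideanSpace.norm_single]
      · refine ⟨-EuclideanSpace.single i 1, ⟨i, Or.inr rfl⟩, ?_⟩
        rw [hi, h1]
        simp [EuclideanSpace.inner_single_left, EuclideanSpace.norm_single, inner_neg_left,
          neg_div]
    · rintro s ⟨d, ⟨i, hd | hd⟩, rfl⟩ <;> subst hd <;>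
        simp only [EuclideanSpace.inner_single_left, EuclideanSpace.norm_single, inner_neg_left,
          norm_neg, map_one, one_mul, norm_one]
      · exact div_le_div_of_nonneg_right
          (le_trans (le_abs_self _) (Finset.le_sup' (fun i => |v i|) (Finset.mem_univ i))) hvpos.le
      · exact div_le_div_of_nonneg_right
          (le_trans (neg_le_abs _) (Finset.le_sup' (fun i => |v i|) (Finset.mem_univ i))) hvpos.le
  -- lower bound : (max_i |v i|)/‖v‖ ≥ 1/√n
  have lower : ∀ v : EuclideanSpace ℝ (Fin n), v ≠ 0 →
      1 / Real.sqrt n ≤ (Finset.univ.sup' hne fun i => |v i|) / ‖v‖ := by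
    intro v hv
    have hvpos : 0 < ‖v‖ := norm_pos_iff.mpr hv
    set M := Finset.univ.sup' hne fun i => |v i| with hM
    have hM0 : 0 ≤ M := le_trans (abs_nonneg (v ⟨0, hn⟩))
      (hM ▸ Finset.le_sup' (fun i => |v i|) (Finset.mem_univ ⟨0, hn⟩))
    have hnorm : ‖v‖ ≤ Real.sqrt n * M := by
      have h1 : ‖v‖ = Real.sqrt (∑ i, v i ^ 2) := by
        rw [EuclideanSpace.norm_eq]
        congr 1
        exact Finset.sum_congr rfl fun i _ => by rw [Real.norm_eq_abs, sq_abs]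
      have h2 : (∑ i, v i ^ 2) ≤ (n:ℝ) * M ^ 2 := by
        calc (∑ i, v i ^ 2) ≤ ∑ _i : Fin n, M ^ 2 := by
              refine Finset.sum_le_sum fun i _ => ?_
              have := Finset.le_sup' (fun i => |v i|) (Finset.mem_univ i)
              calc v i ^ 2 = |v i| ^ 2 := (sq_abs _).symm
                _ ≤ M ^ 2 := by exact pow_le_pow_left₀ (abs_nonneg _) this 2
          _ = (n:ℝ) * M ^ 2 := by simp [Finset.sum_const, mul_comm]
      calc ‖v‖ = Real.sqrt (∑ i, v i ^ 2) := h1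
        _ ≤ Real.sqrt ((n:ℝ) * M ^ 2) := Real.sqrt_le_sqrt h2
        _ = Real.sqrt n * M := by
            rw [Real.sqrt_mul hnpos.le, Real.sqrt_sq hM0]
    rw [div_le_div_iff₀ hsq hvpos]
    linarith
  -- the witness v = (1,…,1)
  set w : EuclideanSpace ℝ (Fin n) := WithLp.toLp 2 (fun _ => (1:ℝ)) with hw
  have hw0 : w ≠ 0 := by
    intro h
    have := congrArg (fun x : EuclideanSpace ℝ (Fin n) => x ⟨0, hn⟩) h
    simp [hw] at this
  have hwnorm : ‖w‖ = Real.sqrt n := by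
    rw [EuclideanSpace.norm_eq]
    simp [hw]
  have hwM : (Finset.univ.sup' hne fun i => |w i|) = 1 := by
    simp [hw]
  have hwval : (Finset.univ.sup' hne fun i => |w i|) / ‖w‖ = 1 / Real.sqrt n := by
    rw [hwM, hwnorm]
  refine IsGLB.csInf_eq ?_ ⟨_, w, hw0, ((key w hw0).csSup_eq).symm⟩
  constructor
  · rintro r ⟨v, hv, rfl⟩
    rw [(key v hv).csSup_eq]
    exact lower v hv
  · intro b hb
    have := hb ⟨w, hw0, ((key w hw0).csSup_eq).symm⟩
    rwa [hwval] at this
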